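/- Let φ : [s₀, ∞) → (0, ∞) be a differentiable positive solution of φ'(s) = -φ/(p-1) + φ^p + e^{-ps/(p-1)} h(e^{s/(p-1)} φ) with φ(s) → κ as s → ∞, and define ω(s) = p ( φ(s)^{p-1} - κ^{p-1} ) + e^{-s} h'( e^{s/(p-1)} φ(s) ), where h' denotes the derivative of h. Then there exist C > 0 and s₁ ≥ s₀ such that |ω(s)| ≤ C s^{-(a+1)} for all s ≥ s₁. -/

import Mathlib

open Real Filter

set_option maxHeartbeats 1600000

noncomputable def hfun (p a μ : ℝ) (z : ℝ) : ℝ :=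
  μ * |z| ^ (p - 1) * z / (Real.log (2 + z ^ 2)) ^ a

lemma log_two_add_sq_pos (z : ℝ) : 0 < Real.log (2 + z ^ 2) :=
  Real.log_pos (by nlinarith [sq_nonneg z])

lemma deriv_hfun (p a μ : ℝ) {x : ℝ} (hx : 0 < x) :
    deriv (hfun p a μ) x =
      μ * p * x ^ (p - 1) * Real.log (2 + x ^ 2) ^ (-a)
        + μ * (x ^ (p - 1) * x) *
          (2 * x / (2 + x ^ 2) * -a * Real.log (2 + x ^ 2) ^ (-a - 1)) := by
  have hL : ∀ z : ℝ, 0 < Real.log (2 + z ^ 2) := log_two_add_sq_pos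
  have heq : hfun p a μ = fun z : ℝ =>
      μ * (|z| ^ (p - 1) * z * Real.log (2 + z ^ 2) ^ (-a)) := by
    funext z
    rw [hfun, Real.rpow_neg (hL z).le]
    ring
  have hev : (fun z : ℝ => μ * (|z| ^ (p - 1) * z * Real.log (2 + z ^ 2) ^ (-a)))
      =ᶠ[nhds x] (fun z : ℝ => μ * (z ^ (p - 1) * z * Real.log (2 + z ^ 2) ^ (-a))) := by
    filter_upwards [Ioi_mem_nhds hx] with z hz
    rw [abs_of_pos hz]
  rw [heq, hev.deriv_eq]
  have hden : (2 : ℝ) + x ^ 2 ≠ 0 := by positivity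
  have h1 : HasDerivAt (fun z : ℝ => z ^ (p - 1)) ((p - 1) * x ^ (p - 1 - 1)) x :=
    Real.hasDerivAt_rpow_const (Or.inl hx.ne')
  have h2 : HasDerivAt (fun z : ℝ => z ^ (p - 1) * z)
      ((p - 1) * x ^ (p - 1 - 1) * x + x ^ (p - 1) * 1) x := h1.mul (hasDerivAt_id x)
  have h2' : (p - 1) * x ^ (p - 1 - 1) * x + x ^ (p - 1) * 1 = p * x ^ (p - 1) := by
    rw [mul_assoc, ← Real.rpow_add_one hx.ne']
    ring_nf
  rw [h2'] at h2
  have h3 : HasDerivAt (fun z : ℝ => 2 + z ^ 2) (2 * x) x := by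
    have := ((hasDerivAt_pow 2 x).const_add 2)
    simpa using this
  have h4 : HasDerivAt (fun z : ℝ => Real.log (2 + z ^ 2)) (2 * x / (2 + x ^ 2)) x :=
    h3.log hden
  have h6 : HasDerivAt (fun z : ℝ => Real.log (2 + z ^ 2) ^ (-a))
      (2 * x / (2 + x ^ 2) * -a * Real.log (2 + x ^ 2) ^ (-a - 1)) x :=
    h4.rpow_const (Or.inl (hL x).ne')
  have h7 := ((h2.mul h6).const_mul μ)
  rw [(show HasDerivAt (fun z : ℝ => μ * (z ^ (p - 1) * z * Real.log (2 + z ^ 2) ^ (-a))) _ x from h7).deriv]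
  ring

/-- Estimate of `ω(s) = p(φ(s)^{p-1} - κ^{p-1}) + e^{-s} h'(e^{s/(p-1)} φ(s))`. -/
theorem stmt14 (p : ℝ) (hp : 1 < p) (a : ℝ) (ha : 0 < a) (μ : ℝ)
    (κ : ℝ) (hκ : κ = (p - 1) ^ (-(1 / (p - 1))))
    (s₀ : ℝ) (φ : ℝ → ℝ) (hpos : ∀ s, s₀ ≤ s → 0 < φ s)
    (hode : ∀ s, s₀ ≤ s → HasDerivAt φ
      (-(φ s) / (p - 1) + φ s ^ p +
        Real.exp (-p * s / (p - 1)) * hfun p a μ (Real.exp (s / (p - 1)) * φ s)) s)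
    (hlim : Tendsto φ atTop (nhds κ)) :
    ∃ C > (0:ℝ), ∃ s₁ : ℝ, s₀ ≤ s₁ ∧ ∀ s, s₁ ≤ s →
      |p * (φ s ^ (p - 1) - κ ^ (p - 1)) +
          Real.exp (-s) * deriv (hfun p a μ) (Real.exp (s / (p - 1)) * φ s)| ≤
        C * s ^ (-(a + 1)) := by
  set q : ℝ := p - 1 with hqdef
  have hq0 : 0 < q := by rw [hqdef]; linarith
  have hqne : q ≠ 0 := hq0.ne'
  have hκ0 : 0 < κ := by rw [hκ]; exact Real.rpow_pos_of_pos hq0 _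
  have hκq : κ ^ q = 1 / q := by
    rw [hκ, ← Real.rpow_mul hq0.le]
    rw [show -(1 / q) * q = -1 by field_simp]
    rw [Real.rpow_neg_one, one_div]
  have hκnq : κ ^ (-q) = q := by
    rw [hκ, ← Real.rpow_mul hq0.le]
    rw [show -(1 / q) * -q = 1 by field_simp]
    exact Real.rpow_one q
  -- a threshold where φ is pinched near κ
  obtain ⟨s₂, hs₂⟩ : ∃ s₂, ∀ s, s₂ ≤ s → φ s ∈ Set.Ioo (κ / 2) (2 * κ) := by
    have h := hlim (Ioo_mem_nhds (show κ/2 < κ by linarith) (show κ < 2*κ by linarith))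
    exact eventually_atTop.mp h
  set s₃ : ℝ := max (max s₀ s₂) (max (max 1 q) (2 * q * |Real.log (κ / 2)|)) with hs₃def
  have hs₃0 : s₀ ≤ s₃ := (le_max_left s₀ s₂).trans (le_max_left _ _)
  have hs₃2 : s₂ ≤ s₃ := (le_max_right s₀ s₂).trans (le_max_left _ _)
  have hs₃1 : (1:ℝ) ≤ s₃ := ((le_max_left 1 q).trans (le_max_left _ _)).trans (le_max_right _ _)
  have hs₃q : q ≤ s₃ := ((le_max_right 1 q).trans (le_max_left _ _)).trans (le_max_right _ _)
  have hs₃log : 2 * q * |Real.log (κ / 2)| ≤ s₃ :=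
    (le_max_right _ _).trans (le_max_right _ _)
  -- the main auxiliary functions
  set Φ : ℝ → ℝ := fun s => Real.exp (s / q) * φ s with hΦdef
  set L : ℝ → ℝ := fun s => Real.log (2 + Φ s ^ 2) with hLdef
  set l : ℝ → ℝ := fun s => L s ^ (-a) with hldef
  set W : ℝ → ℝ := fun s => φ s ^ (-q) with hWdef
  set J : ℝ → ℝ := fun s => W s - q - q * μ * l s with hJdef
  set DΦ : ℝ → ℝ := fun s => Φ s * (φ s ^ q * (1 + μ * l s)) with hDΦdef
  set DL : ℝ → ℝ := fun s => 2 * Φ s * DΦ s / (2 + Φ s ^ 2) with hDLdef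
  set R : ℝ → ℝ := fun s => q * μ * a * L s ^ (-a - 1) * DL s with hRdef
  set K : ℝ → ℝ := fun s => Real.exp (-s) * J s with hKdef
  -- pointwise positivity facts
  have hφpos : ∀ s, s₃ ≤ s → 0 < φ s := fun s hs => hpos s (hs₃0.trans hs)
  have hφlow : ∀ s, s₃ ≤ s → κ / 2 < φ s := fun s hs => (hs₂ s (hs₃2.trans hs)).1
  have hφhigh : ∀ s, s₃ ≤ s → φ s < 2 * κ := fun s hs => (hs₂ s (hs₃2.trans hs)).2
  have hΦpos : ∀ s, s₃ ≤ s → 0 < Φ s := fun s hs =>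
    mul_pos (Real.exp_pos _) (hφpos s hs)
  have hL0 : ∀ s, 0 < L s := fun s => log_two_add_sq_pos (Φ s)
  have hLlow : ∀ s, s₃ ≤ s → s / q ≤ L s := by
    intro s hs
    have hsx : 2 * q * |Real.log (κ / 2)| ≤ s := hs₃log.trans hs
    have h1 : Real.exp (s / q) * (κ / 2) ≤ Φ s :=
      mul_le_mul_of_nonneg_left (hφlow s hs).le (Real.exp_pos _).le
    have hpos2 : 0 < Real.exp (s / q) * (κ / 2) := by positivity
    have h2 : (Real.exp (s / q) * (κ / 2)) ^ 2 ≤ 2 + Φ s ^ 2 := by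
      nlinarith [pow_le_pow_left₀ hpos2.le h1 2]
    have h3 : Real.log ((Real.exp (s / q) * (κ / 2)) ^ 2) ≤ L s :=
      Real.log_le_log (by positivity) h2
    rw [Real.log_pow, Real.log_mul (Real.exp_pos _).ne' (by positivity), Real.log_exp] at h3
    have h4 : 2 * |Real.log (κ / 2)| ≤ s / q := by
      rw [le_div_iff₀ hq0]; nlinarith
    have h5 := neg_abs_le (Real.log (κ / 2))
    push_cast at h3
    linarith
  have hL1 : ∀ s, s₃ ≤ s → 1 ≤ L s := by
    intro s hs
    have h1 : (1:ℝ) ≤ s / q := (one_le_div hq0).mpr (hs₃q.trans hs)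
    linarith [hLlow s hs]
  have hl0 : ∀ s, 0 ≤ l s := fun s => Real.rpow_nonneg (hL0 s).le _
  have hl1 : ∀ s, s₃ ≤ s → l s ≤ 1 := fun s hs =>
    Real.rpow_le_one_of_one_le_of_nonpos (hL1 s hs) (by linarith)
  -- the ODE in cleaned-up form
  have hode' : ∀ s, s₃ ≤ s →
      HasDerivAt φ (-(φ s) / q + φ s ^ p * (1 + μ * l s)) s := by
    intro s hs
    have hx : 0 < φ s := hφpos s hs
    have hΦp : 0 < Φ s := hΦpos s hs
    have H := hode s (hs₃0.trans hs)
    have hval : Real.exp (-p * s / q) * hfun p a μ (Real.exp (s / q) * φ s)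
        = φ s ^ p * (μ * l s) := by
      have harg : Real.exp (s / q) * φ s = Φ s := rfl
      rw [harg, hfun]
      rw [← hqdef, abs_of_pos hΦp]
      have e1 : μ * Φ s ^ q * Φ s = μ * Φ s ^ p := by
        rw [mul_assoc, ← Real.rpow_add_one hΦp.ne' q,
          show q + 1 = p by rw [hqdef]; ring]
      rw [e1]
      have e2 : Φ s ^ p = Real.exp (p * s / q) * φ s ^ p := by
        rw [show Φ s = Real.exp (s / q) * φ s from rfl,
          Real.mul_rpow (Real.exp_pos _).le hx.le, ← Real.exp_mul,
          show s / q * p = p * s / q by ring]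
      rw [e2]
      have e3 : Real.exp (-p * s / q) * Real.exp (p * s / q) = 1 := by
        rw [← Real.exp_add, show -p * s / q + p * s / q = 0 by ring, Real.exp_zero]
      have e4 : l s = (L s ^ a)⁻¹ := by
        rw [hldef]
        exact Real.rpow_neg (hL0 s).le a
      rw [show L s = Real.log (2 + Φ s ^ 2) from rfl] at e4
      rw [e4]
      linear_combination μ * φ s ^ p * (Real.log (2 + Φ s ^ 2) ^ a)⁻¹ * e3
    rw [hval] at H
    convert H using 1
    ring
  -- derivative of W
  have hWd : ∀ s, s₃ ≤ s → HasDerivAt W (J s) s := by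
    intro s hs
    have hx : 0 < φ s := hφpos s hs
    have h := (hode' s hs).rpow_const (p := -q) (Or.inl hx.ne')
    have A1 : φ s ^ (-q - 1) * φ s = φ s ^ (-q) := by
      rw [← Real.rpow_add_one hx.ne']
      ring_nf
    have A2 : φ s ^ (-q - 1) * φ s ^ p = 1 := by
      rw [← Real.rpow_add hx, show -q - 1 + p = 0 by rw [hqdef]; ring, Real.rpow_zero]
    have key : (-(φ s) / q + φ s ^ p * (1 + μ * l s)) * -q * φ s ^ (-q - 1)
        = W s - q - q * μ * l s := by
      have step : (-(φ s) / q + φ s ^ p * (1 + μ * l s)) * -q * φ s ^ (-q - 1)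
          = φ s ^ (-q - 1) * φ s - q * (1 + μ * l s) * (φ s ^ (-q - 1) * φ s ^ p) := by
        field_simp
        ring
      rw [step, A1, A2, show W s = φ s ^ (-q) from rfl]
      ring
    rw [key] at h
    exact h
  -- derivative of Φ
  have hΦd : ∀ s, s₃ ≤ s → HasDerivAt Φ (DΦ s) s := by
    intro s hs
    have hx : 0 < φ s := hφpos s hs
    have hE : HasDerivAt (fun t : ℝ => Real.exp (t / q)) (Real.exp (s / q) * (1 / q)) s := by
      have := ((hasDerivAt_id s).div_const q).exp
      simpa using this
    have h := hE.mul (hode' s hs)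
    have B1 : φ s ^ q * φ s = φ s ^ p := by
      rw [← Real.rpow_add_one hx.ne' q, show q + 1 = p by rw [hqdef]; ring]
    have key : Real.exp (s / q) * (1 / q) * φ s
          + Real.exp (s / q) * (-(φ s) / q + φ s ^ p * (1 + μ * l s)) = DΦ s := by
      show _ = Φ s * (φ s ^ q * (1 + μ * l s))
      rw [show Φ s = Real.exp (s / q) * φ s from rfl, ← B1]
      ring
    rw [key] at h
    exact h
  -- derivative of L
  have hLd : ∀ s, s₃ ≤ s → HasDerivAt L (DL s) s := by
    intro s hs
    have hden : (2 : ℝ) + Φ s ^ 2 ≠ 0 := by positivity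
    have h := (((hΦd s hs).pow 2).const_add 2).log hden
    convert h using 1
    show 2 * Φ s * DΦ s / (2 + Φ s ^ 2) = _
    push_cast
    ring_nf
    all_goals rfl
  -- derivative of l
  have hld : ∀ s, s₃ ≤ s →
      HasDerivAt l (DL s * -a * L s ^ (-a - 1)) s := by
    intro s hs
    exact (hLd s hs).rpow_const (Or.inl (hL0 s).ne')
  -- derivative of J
  have hJd : ∀ s, s₃ ≤ s → HasDerivAt J (J s + R s) s := by
    intro s hs
    have h := ((hWd s hs).sub_const q).sub ((hld s hs).const_mul (q * μ))
    have key : J s - q * μ * (DL s * -a * L s ^ (-a - 1)) = J s + R s := by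
      show _ = J s + q * μ * a * L s ^ (-a - 1) * DL s
      ring
    rw [key] at h
    exact h
  -- derivative of K
  have hKd : ∀ s, s₃ ≤ s → HasDerivAt K (Real.exp (-s) * R s) s := by
    intro s hs
    have hexp : HasDerivAt (fun t : ℝ => Real.exp (-t)) (-Real.exp (-s)) s := by
      have := ((hasDerivAt_id s).neg).exp
      simpa using this
    have h := hexp.mul (hJd s hs)
    have key : -Real.exp (-s) * J s + Real.exp (-s) * (J s + R s)
        = Real.exp (-s) * R s := by ring
    rw [key] at h
    exact h
  -- limits
  have hWlim : Tendsto W atTop (nhds q) := by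
    have h := hlim.rpow_const (p := -q) (Or.inl hκ0.ne')
    rw [hκnq] at h
    exact h
  have hLtop : Tendsto L atTop atTop := by
    refine tendsto_atTop_mono' atTop ?_ (tendsto_id.atTop_div_const hq0)
    exact eventually_atTop.mpr ⟨s₃, fun s hs => hLlow s hs⟩
  have hllim : Tendsto l atTop (nhds 0) := (tendsto_rpow_neg_atTop ha).comp hLtop
  have hJlim : Tendsto J atTop (nhds 0) := by
    have h := (hWlim.sub_const q).sub (hllim.const_mul (q * μ))
    rw [show q - q - q * μ * 0 = 0 by ring] at h
    exact h
  have hKlim : Tendsto K atTop (nhds 0) := by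
    have h := Real.tendsto_exp_neg_atTop_nhds_zero.mul hJlim
    rw [show (0:ℝ) * 0 = 0 by ring] at h
    exact h
  -- constants
  set CL : ℝ := 2 * (2 * κ) ^ q * (1 + |μ|) with hCLdef
  have hCL0 : 0 ≤ CL := by
    have h1 : (0:ℝ) ≤ (2 * κ) ^ q := Real.rpow_nonneg (by linarith) q
    have h2 : (0:ℝ) ≤ 1 + |μ| := by positivity
    positivity
  set CR : ℝ := q * |μ| * a * q ^ (a + 1) * CL with hCRdef
  have hq1 : 0 ≤ q ^ (a + 1) := Real.rpow_nonneg hq0.le _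
  have hCR0 : 0 ≤ CR := by positivity
  -- bound on DL
  have hDLb : ∀ s, s₃ ≤ s → |DL s| ≤ CL := by
    intro s hs
    have hΦp : 0 < Φ s := hΦpos s hs
    have hx : 0 < φ s := hφpos s hs
    have hden : (0:ℝ) < 2 + Φ s ^ 2 := by positivity
    have hDLeq : DL s = 2 * Φ s ^ 2 / (2 + Φ s ^ 2) * (φ s ^ q * (1 + μ * l s)) := by
      show 2 * Φ s * DΦ s / (2 + Φ s ^ 2) = _
      show 2 * Φ s * (Φ s * (φ s ^ q * (1 + μ * l s))) / (2 + Φ s ^ 2) = _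
      ring
    have h1 : 0 ≤ 2 * Φ s ^ 2 / (2 + Φ s ^ 2) := by positivity
    have h2 : 2 * Φ s ^ 2 / (2 + Φ s ^ 2) ≤ 2 := by
      rw [div_le_iff₀ hden]; nlinarith
    have h3 : 0 < φ s ^ q := Real.rpow_pos_of_pos hx q
    have h4 : φ s ^ q ≤ (2 * κ) ^ q :=
      Real.rpow_le_rpow hx.le (hφhigh s hs).le hq0.le
    have h5 : |1 + μ * l s| ≤ 1 + |μ| := by
      calc |1 + μ * l s| ≤ |(1:ℝ)| + |μ * l s| := abs_add_le _ _
        _ = 1 + |μ| * l s := by rw [abs_one, abs_mul, abs_of_nonneg (hl0 s)]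
        _ ≤ 1 + |μ| * 1 := by
            have := hl1 s hs
            nlinarith [abs_nonneg μ]
        _ = 1 + |μ| := by ring
    rw [hDLeq, abs_mul, abs_of_nonneg h1, abs_mul, abs_of_nonneg h3.le]
    calc 2 * Φ s ^ 2 / (2 + Φ s ^ 2) * (φ s ^ q * |1 + μ * l s|)
        ≤ 2 * ((2 * κ) ^ q * (1 + |μ|)) := by
          apply mul_le_mul h2 ?_ (by positivity) (by norm_num)
          apply mul_le_mul h4 h5 (abs_nonneg _) (Real.rpow_nonneg (by linarith) q)
      _ = CL := by rw [hCLdef]; ring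
  -- bound on L^(-a-1)
  have hLneg : ∀ s, s₃ ≤ s → L s ^ (-a - 1) ≤ q ^ (a + 1) * s ^ (-(a + 1)) := by
    intro s hs
    have hs0 : (0:ℝ) < s := lt_of_lt_of_le zero_lt_one (hs₃1.trans hs)
    have hsq : 0 < s / q := by positivity
    have h2 : (s / q) ^ (a + 1) ≤ L s ^ (a + 1) :=
      Real.rpow_le_rpow hsq.le (hLlow s hs) (by linarith)
    have h3 : L s ^ (-a - 1) = (L s ^ (a + 1))⁻¹ := by
      rw [show -a - 1 = -(a + 1) by ring, Real.rpow_neg (hL0 s).le]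
    have h4 : ((s / q) ^ (a + 1))⁻¹ = q ^ (a + 1) * s ^ (-(a + 1)) := by
      rw [← Real.rpow_neg hsq.le, Real.div_rpow hs0.le hq0.le,
        Real.rpow_neg hs0.le, Real.rpow_neg hq0.le]
      field_simp
    rw [h3, ← h4]
    exact inv_anti₀ (Real.rpow_pos_of_pos hsq _) h2
  -- bound on R
  have hRb : ∀ s, s₃ ≤ s → |R s| ≤ CR * s ^ (-(a + 1)) := by
    intro s hs
    have hs0 : (0:ℝ) < s := lt_of_lt_of_le zero_lt_one (hs₃1.trans hs)
    have hL' : 0 ≤ L s ^ (-a - 1) := Real.rpow_nonneg (hL0 s).le _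
    have h1 : |R s| = q * |μ| * a * L s ^ (-a - 1) * |DL s| := by
      show |q * μ * a * L s ^ (-a - 1) * DL s| = _
      rw [abs_mul, abs_mul, abs_mul, abs_mul, abs_of_pos hq0, abs_of_pos ha,
        abs_of_nonneg hL']
    rw [h1]
    calc q * |μ| * a * L s ^ (-a - 1) * |DL s|
        ≤ q * |μ| * a * (q ^ (a + 1) * s ^ (-(a + 1))) * CL := by
          apply mul_le_mul ?_ (hDLb s hs) (abs_nonneg _) ?_
          · exact mul_le_mul_of_nonneg_left (hLneg s hs) (by positivity)
          · have hsa : 0 ≤ s ^ (-(a + 1)) := Real.rpow_nonneg hs0.le _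
            have h1 : (0:ℝ) ≤ q * |μ| * a := by positivity
            exact mul_nonneg h1 (mul_nonneg hq1 hsa)
      _ = CR * s ^ (-(a + 1)) := by rw [hCRdef]; ring
  -- the crucial bound |J s| ≤ CR * s^(-(a+1))
  have hJb : ∀ s, s₃ ≤ s → |J s| ≤ CR * s ^ (-(a + 1)) := by
    intro s hs
    have hs0 : (0:ℝ) < s := lt_of_lt_of_le zero_lt_one (hs₃1.trans hs)
    set c : ℝ := CR * s ^ (-(a + 1)) with hcdef
    have hc0 : 0 ≤ c := mul_nonneg hCR0 (Real.rpow_nonneg hs0.le _)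
    have hder : ∀ x ∈ Set.Ici s, HasDerivAt K (Real.exp (-x) * R x) x :=
      fun x hx => hKd x (hs.trans hx)
    have hbound : ∀ x ∈ Set.Ici s, |Real.exp (-x) * R x| ≤ c * Real.exp (-x) := by
      intro x hx
      have hxs : s ≤ x := hx
      have h1 : |R x| ≤ CR * x ^ (-(a + 1)) := hRb x (hs.trans hxs)
      have h2 : x ^ (-(a + 1)) ≤ s ^ (-(a + 1)) :=
        Real.rpow_le_rpow_of_nonpos hs0 hxs (by linarith)
      rw [abs_mul, abs_of_pos (Real.exp_pos _)]
      calc Real.exp (-x) * |R x| ≤ Real.exp (-x) * (CR * s ^ (-(a + 1))) := by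
            apply mul_le_mul_of_nonneg_left ?_ (Real.exp_pos _).le
            exact h1.trans (mul_le_mul_of_nonneg_left h2 hCR0)
        _ = c * Real.exp (-x) := by rw [hcdef]; ring
    have hmono : ∀ ε : ℝ, ε = 1 ∨ ε = -1 →
        MonotoneOn (fun t => c * (-Real.exp (-t)) + ε * K t) (Set.Ici s) := by
      intro ε hε
      have hd : ∀ x ∈ Set.Ici s, HasDerivAt (fun t => c * (-Real.exp (-t)) + ε * K t)
          (c * Real.exp (-x) + ε * (Real.exp (-x) * R x)) x := by
        intro x hx
        have h1 : HasDerivAt (fun t : ℝ => -Real.exp (-t)) (Real.exp (-x)) x := by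
          have := (((hasDerivAt_id x).neg).exp).neg
          exact this.congr_deriv (by simp)
        exact (h1.const_mul c).add ((hder x hx).const_mul ε)
      apply monotoneOn_of_deriv_nonneg (convex_Ici s)
      · exact fun x hx => (hd x hx).continuousAt.continuousWithinAt
      · exact fun x hx => ((hd x (interior_subset hx)).differentiableAt).differentiableWithinAt
      · intro x hx
        rw [(hd x (interior_subset hx)).deriv]
        have hb := hbound x (interior_subset hx)
        have hε1 : |ε| = 1 := by rcases hε with h | h <;> simp [h]
        have h2 : |ε * (Real.exp (-x) * R x)| ≤ c * Real.exp (-x) := by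
          rw [abs_mul, hε1, one_mul]; exact hb
        have h3 := neg_abs_le (ε * (Real.exp (-x) * R x))
        linarith
    have key : ∀ T, s ≤ T → |K s - K T| ≤ c * Real.exp (-s) := by
      intro T hT
      have hsI : s ∈ Set.Ici s := Set.self_mem_Ici
      have hTI : T ∈ Set.Ici s := hT
      have h1 := hmono 1 (Or.inl rfl) hsI hTI hT
      have h2 := hmono (-1) (Or.inr rfl) hsI hTI hT
      have he : (0:ℝ) ≤ Real.exp (-T) := (Real.exp_pos _).le
      have hce : 0 ≤ c * Real.exp (-T) := by positivity
      rw [abs_le]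
      constructor <;> simp only at h1 h2 <;> nlinarith
    have hTlim : Tendsto (fun T => |K s - K T|) atTop (nhds |K s|) := by
      have h := (tendsto_const_nhds (x := K s) (f := atTop)).sub hKlim
      rw [show K s - 0 = K s by ring] at h
      exact h.abs
    have hKb : |K s| ≤ c * Real.exp (-s) :=
      le_of_tendsto hTlim (eventually_atTop.mpr ⟨s, fun T hT => key T hT⟩)
    have hKs : K s = Real.exp (-s) * J s := rfl
    rw [hKs, abs_mul, abs_of_pos (Real.exp_pos _), mul_comm c] at hKb
    exact (mul_le_mul_iff_right₀ (Real.exp_pos (-s))).mp hKb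
  -- final assembly
  have hp0 : 0 < p := by linarith
  have h2κ : (0:ℝ) ≤ (2 * κ) ^ q := Real.rpow_nonneg (by linarith) q
  refine ⟨p / q * CR * (2 * κ) ^ q + 2 * a * |μ| * (2 * κ) ^ q * q ^ (a + 1) + 1,
    ?_, s₃, hs₃0, ?_⟩
  · have h1 : 0 ≤ p / q * CR * (2 * κ) ^ q :=
      mul_nonneg (mul_nonneg (div_nonneg hp0.le hq0.le) hCR0) h2κ
    have h2 : 0 ≤ 2 * a * |μ| * (2 * κ) ^ q * q ^ (a + 1) :=
      mul_nonneg (mul_nonneg (mul_nonneg (by positivity) (abs_nonneg μ)) h2κ) hq1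
    linarith
  · intro s hs
    have hx : 0 < φ s := hφpos s hs
    have hΦp : 0 < Φ s := hΦpos s hs
    have hs0 : (0:ℝ) < s := lt_of_lt_of_le zero_lt_one (hs₃1.trans hs)
    rw [show Real.exp (s / q) * φ s = Φ s from rfl, deriv_hfun p a μ hΦp, ← hqdef]
    rw [show Real.log (2 + Φ s ^ 2) = L s from rfl]
    -- abbreviations for this value of s
    have hXpos : 0 < φ s ^ q := Real.rpow_pos_of_pos hx q
    have hXle : φ s ^ q ≤ (2 * κ) ^ q :=
      Real.rpow_le_rpow hx.le (hφhigh s hs).le hq0.le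
    have hWinv : W s = (φ s ^ q)⁻¹ := by
      show φ s ^ (-q) = _
      rw [Real.rpow_neg hx.le]
    have hXX : φ s ^ q * (φ s ^ q)⁻¹ = 1 := mul_inv_cancel₀ hXpos.ne'
    have hqq : q⁻¹ * q = 1 := inv_mul_cancel₀ hqne
    have hEX : Real.exp (-s) * Φ s ^ q = φ s ^ q := by
      rw [show Φ s = Real.exp (s / q) * φ s from rfl,
        Real.mul_rpow (Real.exp_pos _).le hx.le, ← Real.exp_mul,
        show s / q * q = s by field_simp, ← mul_assoc, ← Real.exp_add,
        show -s + s = 0 by ring, Real.exp_zero, one_mul]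
    have hJs : J s = W s - q - q * μ * L s ^ (-a) := rfl
    have hsa : 0 ≤ s ^ (-(a + 1)) := Real.rpow_nonneg hs0.le _
    have htot : p * (φ s ^ q - κ ^ q) +
        Real.exp (-s) * (μ * p * Φ s ^ q * L s ^ (-a)
          + μ * (Φ s ^ q * Φ s) * (2 * Φ s / (2 + Φ s ^ 2) * -a * L s ^ (-a - 1)))
        = -(p / q * J s * φ s ^ q)
          + μ * φ s ^ q * Φ s * (2 * Φ s / (2 + Φ s ^ 2) * -a * L s ^ (-a - 1)) := by
      rw [hκq, hJs, hWinv]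
      linear_combination (μ * p * L s ^ (-a)
          + μ * Φ s * (2 * Φ s / (2 + Φ s ^ 2) * -a * L s ^ (-a - 1))) * hEX
        + (p / q) * hXX
        - (p * φ s ^ q + p * μ * L s ^ (-a) * φ s ^ q) * hqq
    rw [htot]
    -- bound the two pieces
    have hJbs : |J s| ≤ CR * s ^ (-(a + 1)) := hJb s hs
    have hT1 : |(-(p / q * J s * φ s ^ q))| ≤ p / q * CR * (2 * κ) ^ q * s ^ (-(a + 1)) := by
      rw [abs_neg, abs_mul, abs_mul, abs_of_pos (div_pos hp0 hq0), abs_of_pos hXpos]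
      calc p / q * |J s| * φ s ^ q
          ≤ p / q * (CR * s ^ (-(a + 1))) * ((2 * κ) ^ q) := by
            apply mul_le_mul ?_ hXle hXpos.le ?_
            · exact mul_le_mul_of_nonneg_left hJbs (div_pos hp0 hq0).le
            · exact mul_nonneg (div_pos hp0 hq0).le (mul_nonneg hCR0 hsa)
        _ = p / q * CR * (2 * κ) ^ q * s ^ (-(a + 1)) := by ring
    have hT2 : |μ * φ s ^ q * Φ s * (2 * Φ s / (2 + Φ s ^ 2) * -a * L s ^ (-a - 1))|
        ≤ 2 * a * |μ| * (2 * κ) ^ q * q ^ (a + 1) * s ^ (-(a + 1)) := by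
      have hden : (0:ℝ) < 2 + Φ s ^ 2 := by positivity
      have hL' : 0 ≤ L s ^ (-a - 1) := Real.rpow_nonneg (hL0 s).le _
      have heq : μ * φ s ^ q * Φ s * (2 * Φ s / (2 + Φ s ^ 2) * -a * L s ^ (-a - 1))
          = -(μ * a * (2 * Φ s ^ 2 / (2 + Φ s ^ 2)) * φ s ^ q * L s ^ (-a - 1)) := by
        ring
      have hfrac0 : 0 ≤ 2 * Φ s ^ 2 / (2 + Φ s ^ 2) := by positivity
      have hfrac2 : 2 * Φ s ^ 2 / (2 + Φ s ^ 2) ≤ 2 := by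
        rw [div_le_iff₀ hden]; nlinarith
      rw [heq, abs_neg, abs_mul, abs_mul, abs_mul, abs_mul, abs_of_pos ha,
        abs_of_nonneg hfrac0, abs_of_pos hXpos, abs_of_nonneg hL']
      calc |μ| * a * (2 * Φ s ^ 2 / (2 + Φ s ^ 2)) * φ s ^ q * L s ^ (-a - 1)
          ≤ |μ| * a * 2 * ((2 * κ) ^ q) * (q ^ (a + 1) * s ^ (-(a + 1))) := by
            apply mul_le_mul ?_ (hLneg s hs) hL' ?_
            · apply mul_le_mul ?_ hXle hXpos.le ?_
              · exact mul_le_mul_of_nonneg_left hfrac2 (by positivity)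
              · positivity
            · have := mul_nonneg (mul_nonneg (mul_nonneg (abs_nonneg μ) ha.le)
                (by norm_num : (0:ℝ) ≤ 2)) h2κ
              exact this
        _ = 2 * a * |μ| * (2 * κ) ^ q * q ^ (a + 1) * s ^ (-(a + 1)) := by ring
    calc |(-(p / q * J s * φ s ^ q))
          + μ * φ s ^ q * Φ s * (2 * Φ s / (2 + Φ s ^ 2) * -a * L s ^ (-a - 1))|
        ≤ |(-(p / q * J s * φ s ^ q))|
          + |μ * φ s ^ q * Φ s * (2 * Φ s / (2 + Φ s ^ 2) * -a * L s ^ (-a - 1))| :=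
          abs_add_le _ _
      _ ≤ p / q * CR * (2 * κ) ^ q * s ^ (-(a + 1))
          + 2 * a * |μ| * (2 * κ) ^ q * q ^ (a + 1) * s ^ (-(a + 1)) := add_le_add hT1 hT2
      _ ≤ (p / q * CR * (2 * κ) ^ q + 2 * a * |μ| * (2 * κ) ^ q * q ^ (a + 1) + 1)
          * s ^ (-(a + 1)) := by nlinarith
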